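/- arXiv:2505.07335 — 5 statements merged into one kernel-verified Lean document; each statement's English description precedes it below -/
import Mathlib

section
/- Let d, λ, y > 0 and x ∈ ℝ. Suppose that for all nonzero integers p and all integers q, (p/(d/λ))² + ((q·d/λ − p·x/λ)/((d/λ)(y/λ)))² > 4. Then there exist no angles θ ≠ θ' (mod 2π) with sin θ ≠ sin θ' satisfying simultaneously d(sin θ − sin θ')/λ ∈ ℤ \ {0} and (x(sin θ − sin θ') + y(cos θ − cos θ'))/λ ∈ ℤ. -/
open Real

theorem stmt_1 (d lam x y : ℝ) (hd : 0 < d) (hlam : 0 < lam) (hy : 0 < y)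
    (hC3 : ∀ (p : ℤ), p ≠ 0 → ∀ q : ℤ,
      ((p : ℝ) / (d / lam)) ^ 2 +
        (((q : ℝ) * (d / lam) - (p : ℝ) * (x / lam)) / ((d / lam) * (y / lam))) ^ 2 > 4) :
    ¬ ∃ θ θ' : ℝ, (¬ ∃ k : ℤ, θ - θ' = 2 * π * k) ∧ sin θ ≠ sin θ' ∧
      (∃ p : ℤ, p ≠ 0 ∧ d * (sin θ - sin θ') / lam = (p : ℝ)) ∧
      (∃ q : ℤ, (x * (sin θ - sin θ') + y * (cos θ - cos θ')) / lam = (q : ℝ)) := by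
  rintro ⟨θ, θ', -, -, ⟨p, hp, hpe⟩, ⟨q, hqe⟩⟩
  have hC := hC3 p hp q
  have hd' : d ≠ 0 := hd.ne'
  have hlam' : lam ≠ 0 := hlam.ne'
  have hy' : y ≠ 0 := hy.ne'
  set s := sin θ - sin θ' with hs
  set c := cos θ - cos θ' with hc
  have h1 : (p : ℝ) / (d / lam) = s := by
    rw [← hpe]; field_simp
  have h2 : ((q : ℝ) * (d / lam) - (p : ℝ) * (x / lam)) / ((d / lam) * (y / lam)) = c := by
    rw [← hpe, ← hqe]; field_simp; ring
  rw [h1, h2] at hC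
  have hbound : s ^ 2 + c ^ 2 ≤ 4 := by
    have h3 : s ^ 2 + c ^ 2 = 2 - 2 * cos (θ - θ') := by
      rw [cos_sub, hs, hc]
      have := sin_sq_add_cos_sq θ
      have := sin_sq_add_cos_sq θ'
      ring_nf
      nlinarith
    have := neg_one_le_cos (θ - θ')
    nlinarith
  linarith
end

section
/- For d = √3·λ/3, x = √3·λ/6, y = λ/2, and for all integers p ≠ 0 and q, the quantity (p/(d/λ))² + ((q·d/λ − p·x/λ)/((d/λ)(y/λ)))² equals 3p² + (2q − p)², and this is at least 4, with equality exactly when (p,q) ∈ {(1,0), (1,1), (−1,0), (−1,−1)}. -/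
lemma int_part (p q : ℤ) (hp : p ≠ 0) :
    3 * p ^ 2 + (2 * q - p) ^ 2 ≥ 4 ∧
    (3 * p ^ 2 + (2 * q - p) ^ 2 = 4 ↔
      (p, q) = (1, 0) ∨ (p, q) = (1, 1) ∨ (p, q) = (-1, 0) ∨ (p, q) = (-1, -1)) := by
  have hcase : p = 1 ∨ p = -1 ∨ 2 ≤ p ∨ p ≤ -2 := by omega
  have key : ∀ a : ℤ, a ^ 2 = 1 → a = 1 ∨ a = -1 := by
    intro a ha
    have h4 : (a - 1) * (a + 1) = 0 := by nlinarith
    rcases mul_eq_zero.mp h4 with h | h <;> omega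
  rcases hcase with h | h | h | h
  · subst h
    have hodd : (2 * q - 1) ^ 2 ≥ 1 := by have := pow_two_pos_of_ne_zero (show 2 * q - 1 ≠ 0 by omega); linarith
    refine ⟨by nlinarith, ?_, ?_⟩
    · intro heq
      have : (2 * q - 1) ^ 2 = 1 := by linarith
      rcases key _ this with h | h <;> simp <;> omega
    · rintro (h | h | h | h) <;> simp_all <;> ring
  · subst h
    have hodd : (2 * q + 1) ^ 2 ≥ 1 := by have := pow_two_pos_of_ne_zero (show 2 * q + 1 ≠ 0 by omega); linarith
    refine ⟨by nlinarith, ?_, ?_⟩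
    · intro heq
      have : (2 * q + 1) ^ 2 = 1 := by nlinarith
      rcases key _ this with h | h <;> simp <;> omega
    · rintro (h | h | h | h) <;> simp_all <;> ring
  · have : p ^ 2 ≥ 4 := by nlinarith
    refine ⟨by nlinarith [sq_nonneg (2 * q - p)], ?_, ?_⟩
    · intro heq; exfalso; nlinarith [sq_nonneg (2 * q - p)]
    · rintro (h | h | h | h) <;> simp_all <;> omega
  · have : p ^ 2 ≥ 4 := by nlinarith
    refine ⟨by nlinarith [sq_nonneg (2 * q - p)], ?_, ?_⟩
    · intro heq; exfalso; nlinarith [sq_nonneg (2 * q - p)]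
    · rintro (h | h | h | h) <;> simp_all <;> omega

theorem stmt_3 (lam d x y : ℝ) (hlam : 0 < lam)
    (hd : d = Real.sqrt 3 * lam / 3) (hx : x = Real.sqrt 3 * lam / 6) (hy : y = lam / 2)
    (p q : ℤ) (hp : p ≠ 0) :
    ((p : ℝ) / (d / lam)) ^ 2 +
        (((q : ℝ) * (d / lam) - (p : ℝ) * (x / lam)) / ((d / lam) * (y / lam))) ^ 2 =
      3 * (p : ℝ) ^ 2 + (2 * (q : ℝ) - (p : ℝ)) ^ 2 ∧
    (3 * (p : ℝ) ^ 2 + (2 * (q : ℝ) - (p : ℝ)) ^ 2 ≥ 4) ∧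
    (3 * (p : ℝ) ^ 2 + (2 * (q : ℝ) - (p : ℝ)) ^ 2 = 4 ↔
      (p, q) = (1, 0) ∨ (p, q) = (1, 1) ∨ (p, q) = (-1, 0) ∨ (p, q) = (-1, -1)) := by
  obtain ⟨h1, h2⟩ := int_part p q hp
  have hs3 : Real.sqrt 3 > 0 := Real.sqrt_pos.mpr (by norm_num)
  have hs3sq : Real.sqrt 3 ^ 2 = 3 := Real.sq_sqrt (by norm_num)
  have hlne : lam ≠ 0 := ne_of_gt hlam
  have hdl : d / lam = Real.sqrt 3 / 3 := by rw [hd]; field_simp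
  have hxl : x / lam = Real.sqrt 3 / 6 := by rw [hx]; field_simp
  have hyl : y / lam = 1 / 2 := by rw [hy]; field_simp
  refine ⟨?_, by exact_mod_cast h1, ?_⟩
  · rw [hdl, hxl, hyl]
    have h3 : Real.sqrt 3 ≠ 0 := ne_of_gt hs3
    field_simp
    nlinarith [sq_nonneg ((q:ℝ) - p), sq_nonneg ((2:ℝ)*q - p)]
  · rw [show (3 : ℝ) * (p : ℝ) ^ 2 + (2 * (q : ℝ) - (p : ℝ)) ^ 2 = ((3 * p ^ 2 + (2 * q - p) ^ 2 : ℤ) : ℝ) by push_cast; ring,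
      show (4 : ℝ) = ((4 : ℤ) : ℝ) by norm_num, Int.cast_inj]
    exact h2
end

section
/- Suppose the beam patterns of a multiple linear array satisfy f_w(θ) = f_w(θ') for every choice of complex weight vector w, where f_w(θ) is a weighted sum of the exponentials exp(i·2π(n−1)d₁ sin θ/λ) for n = 1,…,N₁ and exp(i·2π(x_{l,1} sin θ + y_{l,1} cos θ)/λ)·exp(i·2π(n−1)d_l sin θ/λ) for l = 2,…,M, n = 1,…,N_l (with N_l ≥ 2 and sin θ ≠ sin θ'). Then for each i = 1,…,M, d_i(sin θ − sin θ')/λ ∈ ℤ \ {0}, and for each l = 2,…,M, (x_{l,1}(sin θ − sin θ') + y_{l,1}(cos θ − cos θ'))/λ ∈ ℤ. -/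
open Real

lemma exp_I_real_eq_aux {a b : ℝ}
    (h : Complex.exp (Complex.I * a) = Complex.exp (Complex.I * b)) :
    ∃ k : ℤ, a - b = 2 * π * k := by
  rw [Complex.exp_eq_exp_iff_exists_int] at h
  obtain ⟨k, hk⟩ := h
  refine ⟨k, ?_⟩
  have h2 : (Complex.I : ℂ) * a = Complex.I * ((b : ℂ) + 2 * π * k) := by
    rw [hk]; ring
  have h3 := mul_left_cancel₀ Complex.I_ne_zero h2
  have h4 : (a : ℂ) = ((b + 2 * π * k : ℝ) : ℂ) := by push_cast; rw [h3]
  have h5 := Complex.ofReal_inj.mp h4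
  linarith

theorem stmt_7 (M : ℕ) (hM : 1 ≤ M) (lam : ℝ) (hlam : 0 < lam)
    (d : Fin M → ℝ) (hd : ∀ i, 0 < d i)
    (x y : Fin M → ℝ) (hx0 : x ⟨0, hM⟩ = 0) (hy0 : y ⟨0, hM⟩ = 0)
    (Nl : Fin M → ℕ) (hNl : ∀ l, 2 ≤ Nl l)
    (θ θ' : ℝ) (hsin : sin θ ≠ sin θ')
    (F : (∀ l : Fin M, Fin (Nl l) → ℂ) → ℝ → ℂ)
    (hF : ∀ w φ, F w φ = ((∑ l, ∑ n, ‖w l n‖ : ℝ) : ℂ)⁻¹ *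
      ∑ l, Complex.exp (Complex.I * (2 * π * (x l * sin φ + y l * cos φ) / lam)) *
        ∑ n, w l n * Complex.exp (Complex.I * (2 * π * (n : ℕ) * d l * sin φ / lam)))
    (heq : ∀ w, F w θ = F w θ') :
    (∀ i : Fin M, ∃ p : ℤ, p ≠ 0 ∧ d i * (sin θ - sin θ') / lam = (p : ℝ)) ∧
    (∀ l : Fin M, l ≠ ⟨0, hM⟩ →
      ∃ q : ℤ, (x l * (sin θ - sin θ') + y l * (cos θ - cos θ')) / lam = (q : ℝ)) := by
  have hπ : (0:ℝ) < π := Real.pi_pos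
  -- Key step: the single-term exponentials must agree.
  have key : ∀ (l : Fin M) (nv : Fin (Nl l)), ∃ k : ℤ,
      (2 * π * (x l * sin θ + y l * cos θ) / lam + 2 * π * (nv : ℕ) * d l * sin θ / lam)
      - (2 * π * (x l * sin θ' + y l * cos θ') / lam + 2 * π * (nv : ℕ) * d l * sin θ' / lam)
      = 2 * π * k := by
    intro l nv
    set w : ∀ l' : Fin M, Fin (Nl l') → ℂ :=
      fun l' n' => if l' = l ∧ (n' : ℕ) = (nv : ℕ) then 1 else 0 with hw
    have hnorm : (∑ l', ∑ n', ‖w l' n'‖ : ℝ) = 1 := by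
      rw [Finset.sum_eq_single l]
      · rw [Finset.sum_eq_single nv]
        · simp [hw]
        · intro b _ hb
          have : ¬ ((b : ℕ) = (nv : ℕ)) := fun hc => hb (Fin.ext hc)
          simp [hw, this]
        · simp
      · intro b _ hb
        apply Finset.sum_eq_zero
        intro n' _
        simp [hw, hb]
      · simp
    have hinner : ∀ φ : ℝ,
        (∑ l', Complex.exp (Complex.I * (2 * π * (x l' * sin φ + y l' * cos φ) / lam)) *
          ∑ n', w l' n' * Complex.exp (Complex.I * (2 * π * (n' : ℕ) * d l' * sin φ / lam)))
        = Complex.exp (Complex.I * (2 * π * (x l * sin φ + y l * cos φ) / lam)) *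
          Complex.exp (Complex.I * (2 * π * (nv : ℕ) * d l * sin φ / lam)) := by
      intro φ
      rw [Finset.sum_eq_single l]
      · congr 1
        rw [Finset.sum_eq_single nv]
        · simp [hw]
        · intro b _ hb
          have : ¬ ((b : ℕ) = (nv : ℕ)) := fun hc => hb (Fin.ext hc)
          simp [hw, this]
        · simp
      · intro b _ hb
        have hz : ∀ n' : Fin (Nl b), w b n' = 0 := fun n' => by simp [hw, hb]
        simp [hz]
      · simp
    have h := heq w
    rw [hF, hF, hinner θ, hinner θ', hnorm] at h
    simp only [Complex.ofReal_one, inv_one, one_mul] at h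
    rw [← Complex.exp_add, ← Complex.exp_add] at h
    have h2 : Complex.exp (Complex.I *
        ((2 * π * (x l * sin θ + y l * cos θ) / lam + 2 * π * (nv : ℕ) * d l * sin θ / lam : ℝ) : ℂ))
        = Complex.exp (Complex.I *
        ((2 * π * (x l * sin θ' + y l * cos θ') / lam + 2 * π * (nv : ℕ) * d l * sin θ' / lam : ℝ) : ℂ)) := by
      convert h using 2 <;> push_cast <;> ring
    exact exp_I_real_eq_aux h2
  have key2 : ∀ (l : Fin M) (n : ℕ), n < Nl l → ∃ k : ℤ,
      (x l * (sin θ - sin θ') + y l * (cos θ - cos θ')) / lam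
        + n * (d l * (sin θ - sin θ') / lam) = (k : ℝ) := by
    intro l n hn
    obtain ⟨k, hk⟩ := key l ⟨n, hn⟩
    refine ⟨k, ?_⟩
    have h2 : 2 * π * ((x l * (sin θ - sin θ') + y l * (cos θ - cos θ')) / lam
        + n * (d l * (sin θ - sin θ') / lam)) = 2 * π * (k : ℝ) := by
      rw [← hk]
      simp only [Fin.val_mk] at *
      field_simp
      ring
    exact mul_left_cancel₀ (by positivity : (2 * π : ℝ) ≠ 0) h2
  constructor
  · intro i
    obtain ⟨q0, h0⟩ := key2 i 0 (by have := hNl i; omega)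
    obtain ⟨q1, h1⟩ := key2 i 1 (by have := hNl i; omega)
    have hval : d i * (sin θ - sin θ') / lam = ((q1 - q0 : ℤ) : ℝ) := by
      push_cast
      push_cast at h0 h1
      linarith
    refine ⟨q1 - q0, ?_, hval⟩
    intro hq
    have hne : d i * (sin θ - sin θ') / lam ≠ 0 :=
      div_ne_zero (mul_ne_zero (hd i).ne' (sub_ne_zero.mpr hsin)) hlam.ne'
    rw [hval, hq] at hne
    simp at hne
  · intro l _
    obtain ⟨q0, h0⟩ := key2 l 0 (by have := hNl l; omega)
    refine ⟨q0, ?_⟩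
    push_cast at h0
    linarith
end

section
/- Under the setting of the multiple linear array, if for each i = 1,…,M, d_i(sin θ − sin θ')/λ is a nonzero integer, and for each l = 2,…,M, (x_{l,1}(sin θ − sin θ') + y_{l,1}(cos θ − cos θ'))/λ is an integer, then for every weight vector w, the array response satisfies f_w(θ) = f_w(θ'). -/
open Real

lemma phase_eq_aux (a b : ℝ) (k : ℤ) (h : a - b = (k : ℝ)) :
    Complex.exp (Complex.I * (2 * π * a)) = Complex.exp (Complex.I * (2 * π * b)) := by
  have ha : (a : ℂ) = (b : ℂ) + (k : ℂ) := by
    have : a = b + (k : ℝ) := by linarith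
    exact_mod_cast congrArg (Complex.ofReal) this
  have : Complex.I * (2 * π * a) = Complex.I * (2 * π * b) + (k : ℂ) * (2 * π * Complex.I) := by
    rw [ha]; ring
  rw [this, Complex.exp_add, Complex.exp_int_mul_two_pi_mul_I, mul_one]

set_option maxHeartbeats 1000000 in
theorem stmt_8 (M : ℕ) (hM : 1 ≤ M) (lam : ℝ) (hlam : 0 < lam)
    (d : Fin M → ℝ) (hd : ∀ i, 0 < d i)
    (x y : Fin M → ℝ) (hx0 : x ⟨0, hM⟩ = 0) (hy0 : y ⟨0, hM⟩ = 0)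
    (Nl : Fin M → ℕ) (hNl : ∀ l, 2 ≤ Nl l)
    (θ θ' : ℝ)
    (F : (∀ l : Fin M, Fin (Nl l) → ℂ) → ℝ → ℂ)
    (hF : ∀ w φ, F w φ = ((∑ l, ∑ n, ‖w l n‖ : ℝ) : ℂ)⁻¹ *
      ∑ l, Complex.exp (Complex.I * (2 * π * (x l * sin φ + y l * cos φ) / lam)) *
        ∑ n, w l n * Complex.exp (Complex.I * (2 * π * (n : ℕ) * d l * sin φ / lam)))
    (hC1 : ∀ i : Fin M, ∃ p : ℤ, p ≠ 0 ∧ d i * (sin θ - sin θ') / lam = (p : ℝ))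
    (hC2 : ∀ l : Fin M, l ≠ ⟨0, hM⟩ →
      ∃ q : ℤ, (x l * (sin θ - sin θ') + y l * (cos θ - cos θ')) / lam = (q : ℝ)) :
    ∀ w, F w θ = F w θ' := by
  intro w
  have hlam' : lam ≠ 0 := ne_of_gt hlam
  rw [hF, hF]
  have hsum : (∑ l, Complex.exp (Complex.I * (2 * π * (x l * sin θ + y l * cos θ) / lam)) *
        ∑ n, w l n * Complex.exp (Complex.I * (2 * π * (n : ℕ) * d l * sin θ / lam))) =
      (∑ l, Complex.exp (Complex.I * (2 * π * (x l * sin θ' + y l * cos θ') / lam)) *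
        ∑ n, w l n * Complex.exp (Complex.I * (2 * π * (n : ℕ) * d l * sin θ' / lam))) := by
    apply Finset.sum_congr rfl
    intro l _
    have houter : Complex.exp (Complex.I * (2 * π * (x l * sin θ + y l * cos θ) / lam)) =
        Complex.exp (Complex.I * (2 * π * (x l * sin θ' + y l * cos θ') / lam)) := by
      obtain ⟨q, hq⟩ : ∃ q : ℤ, (x l * (sin θ - sin θ') + y l * (cos θ - cos θ')) / lam = (q : ℝ) := by
        by_cases hl : l = ⟨0, hM⟩
        · exact ⟨0, by rw [hl, hx0, hy0]; simp⟩
        · exact hC2 l hl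
      set a : ℝ := (x l * sin θ + y l * cos θ) / lam with ha
      set b : ℝ := (x l * sin θ' + y l * cos θ') / lam with hb
      have e1 : Complex.I * (2 * π * (x l * sin θ + y l * cos θ) / lam) =
          Complex.I * (2 * π * (a : ℂ)) := by
        rw [ha]; push_cast; ring
      have e2 : Complex.I * (2 * π * (x l * sin θ' + y l * cos θ') / lam) =
          Complex.I * (2 * π * (b : ℂ)) := by
        rw [hb]; push_cast; ring
      rw [e1, e2]
      refine phase_eq_aux a b q ?_
      rw [← hq, ha, hb]; field_simp; ring
    have hinner : (∑ n, w l n * Complex.exp (Complex.I * (2 * π * (n : ℕ) * d l * sin θ / lam))) =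
        (∑ n, w l n * Complex.exp (Complex.I * (2 * π * (n : ℕ) * d l * sin θ' / lam))) := by
      apply Finset.sum_congr rfl
      intro n _
      obtain ⟨p, _, hp⟩ := hC1 l
      set a : ℝ := ((n : ℕ) : ℝ) * (d l * sin θ / lam) with ha
      set b : ℝ := ((n : ℕ) : ℝ) * (d l * sin θ' / lam) with hb
      have e1 : Complex.I * (2 * π * (n : ℕ) * d l * sin θ / lam) =
          Complex.I * (2 * π * (a : ℂ)) := by
        rw [ha]; push_cast; ring
      have e2 : Complex.I * (2 * π * (n : ℕ) * d l * sin θ' / lam) =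
          Complex.I * (2 * π * (b : ℂ)) := by
        rw [hb]; push_cast; ring
      rw [e1, e2, phase_eq_aux a b ((n : ℕ) * p)
        (by rw [ha, hb]; push_cast; rw [← hp]; field_simp)]
    rw [houter, hinner]
  rw [hsum]
end

section
/- Let r > 0, θ ∈ ℝ, and (xₙ, yₙ) ∈ ℝ². Then the distance rₙ = √((r sin θ − xₙ)² + (r cos θ − yₙ)²) satisfies rₙ = r·√(1 − 2(xₙ sin θ + yₙ cos θ)/r + (xₙ² + yₙ²)/r²). Moreover, |rₙ − (r − (xₙ sin θ + yₙ cos θ))| ≤ (xₙ² + yₙ²)/(2r) whenever r > √(xₙ² + yₙ²) (i.e., the far-field linear approximation error is at most (xₙ²+yₙ²)/(2r)). -/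
open Real

theorem stmt_15 (r θ xn yn : ℝ) (hr : 0 < r)
    (rn : ℝ) (hrn : rn = Real.sqrt ((r * sin θ - xn) ^ 2 + (r * cos θ - yn) ^ 2)) :
    rn = r * Real.sqrt (1 - 2 * (xn * sin θ + yn * cos θ) / r + (xn ^ 2 + yn ^ 2) / r ^ 2) ∧
    (Real.sqrt (xn ^ 2 + yn ^ 2) < r →
      |rn - (r - (xn * sin θ + yn * cos θ))| ≤ (xn ^ 2 + yn ^ 2) / (2 * r)) := by
  have hpy := sin_sq_add_cos_sq θ
  have hX' : (r * sin θ - xn) ^ 2 + (r * cos θ - yn) ^ 2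
      = r ^ 2 - 2 * r * (xn * sin θ + yn * cos θ) + (xn ^ 2 + yn ^ 2) := by
    nlinarith [hpy]
  have hX : (r * sin θ - xn) ^ 2 + (r * cos θ - yn) ^ 2
      = r ^ 2 * (1 - 2 * (xn * sin θ + yn * cos θ) / r + (xn ^ 2 + yn ^ 2) / r ^ 2) := by
    rw [hX']; field_simp
  constructor
  · rw [hrn, hX, Real.sqrt_mul (sq_nonneg r), Real.sqrt_sq hr.le]
  · intro h
    have hs0 : (0:ℝ) ≤ xn ^ 2 + yn ^ 2 := by positivity
    have hsr : xn ^ 2 + yn ^ 2 < r ^ 2 := by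
      have := Real.sq_sqrt hs0
      nlinarith [Real.sqrt_nonneg (xn ^ 2 + yn ^ 2)]
    have ha2 : (xn * sin θ + yn * cos θ) ^ 2 ≤ xn ^ 2 + yn ^ 2 := by
      nlinarith [sq_nonneg (xn * cos θ - yn * sin θ)]
    have har : xn * sin θ + yn * cos θ < r := by nlinarith
    have hlow : r - (xn * sin θ + yn * cos θ) ≤ rn := by
      rw [hrn, hX']
      have h1 : r - (xn * sin θ + yn * cos θ)
          ≤ Real.sqrt ((r - (xn * sin θ + yn * cos θ)) ^ 2) := by
        rw [Real.sqrt_sq (by linarith)]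
      refine h1.trans (Real.sqrt_le_sqrt ?_)
      nlinarith
    have hhigh : rn ≤ r - (xn * sin θ + yn * cos θ) + (xn ^ 2 + yn ^ 2) / (2 * r) := by
      rw [hrn, hX']
      have h2 : r ^ 2 - 2 * r * (xn * sin θ + yn * cos θ) + (xn ^ 2 + yn ^ 2)
          ≤ (r - (xn * sin θ + yn * cos θ) + (xn ^ 2 + yn ^ 2) / (2 * r)) ^ 2 := by
        have key : (0:ℝ) ≤ ((xn * sin θ + yn * cos θ) - (xn ^ 2 + yn ^ 2) / (2 * r)) ^ 2 :=
          sq_nonneg _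
        have heq : (r - (xn * sin θ + yn * cos θ) + (xn ^ 2 + yn ^ 2) / (2 * r)) ^ 2
            - (r ^ 2 - 2 * r * (xn * sin θ + yn * cos θ) + (xn ^ 2 + yn ^ 2))
            = ((xn * sin θ + yn * cos θ) - (xn ^ 2 + yn ^ 2) / (2 * r)) ^ 2 := by
          field_simp
          ring
        linarith
      have h3 : (0:ℝ) ≤ r - (xn * sin θ + yn * cos θ) + (xn ^ 2 + yn ^ 2) / (2 * r) := by
        have : (0:ℝ) ≤ (xn ^ 2 + yn ^ 2) / (2 * r) := by positivity
        linarith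
      calc Real.sqrt (r ^ 2 - 2 * r * (xn * sin θ + yn * cos θ) + (xn ^ 2 + yn ^ 2))
          ≤ Real.sqrt ((r - (xn * sin θ + yn * cos θ) + (xn ^ 2 + yn ^ 2) / (2 * r)) ^ 2) :=
            Real.sqrt_le_sqrt h2
        _ = _ := Real.sqrt_sq h3
    rw [abs_of_nonneg (by linarith)]
    linarith
end
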